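/- Let j_mid be the rightmost index of the outermost (middle) guard-band in G = g(X, n₀, ξ), where |X| = 2^n. If n₀ ≥ log_{2^{-ξ}}((1-2^{-ξ})/2) and n ≥ n₀+1, then the number of data bits up to j_mid, which equals 2^{n-1}, is at least the number of guard-band bits up to j_mid, which equals (|G| - 2^n)/2 + ℓ_n/2. -/
import Mathlib


/-- Guard-band length at level `m`: `ℓ_m = ⌊2^((1-ξ)(m-1))⌋`. -/
noncomputable def gbLen (ξ : ℝ) (m : ℕ) : ℕ := ⌊(2:ℝ) ^ ((1 - ξ) * ((m:ℝ) - 1))⌋₊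

/-- Marker word of `g(X, n₀, ξ)` at level `n` (`true` = data bit, `false` = guard-band bit). -/
noncomputable def gbMark (ξ : ℝ) (n₀ : ℕ) : ℕ → List Bool
  | 0 => List.replicate (2 ^ 0) true
  | (n + 1) =>
      if n + 1 ≤ n₀ then List.replicate (2 ^ (n + 1)) true
      else gbMark ξ n₀ n ++ List.replicate (gbLen ξ (n + 1)) false ++ gbMark ξ n₀ n

lemma gbLen_le (ξ : ℝ) (m : ℕ) :
    (gbLen ξ (m + 1) : ℝ) ≤ 2 ^ m * ((2:ℝ) ^ (-ξ)) ^ m := by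
  have h1 : (gbLen ξ (m + 1) : ℝ) ≤ (2:ℝ) ^ ((1 - ξ) * ((m + 1 : ℕ) - 1 : ℝ)) :=
    Nat.floor_le (Real.rpow_nonneg (by norm_num) _)
  have h2 : ((m + 1 : ℕ) : ℝ) - 1 = (m : ℝ) := by push_cast; ring
  rw [h2] at h1
  have h3 : (2:ℝ) ^ ((1 - ξ) * (m : ℝ)) = 2 ^ m * ((2:ℝ) ^ (-ξ)) ^ m := by
    rw [show (1 - ξ) * (m : ℝ) = (m : ℝ) + (-ξ) * (m : ℝ) by ring,
      Real.rpow_add (by norm_num), Real.rpow_natCast,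
      Real.rpow_mul (by norm_num : (0:ℝ) ≤ 2), Real.rpow_natCast]
  linarith [h3 ▸ h1]

lemma gbMark_len_le (ξ : ℝ) (n₀ : ℕ) :
    ∀ n, n₀ ≤ n → ((gbMark ξ n₀ n).length : ℝ) ≤
      2 ^ n + 2 ^ n / 2 * ∑ k ∈ Finset.Ico n₀ n, ((2:ℝ) ^ (-ξ)) ^ k := by
  intro n
  induction n with
  | zero =>
    intro h
    interval_cases n₀
    simp [gbMark]
  | succ n ih =>
    intro h
    by_cases hif : n + 1 ≤ n₀
    · have hn₀ : n₀ = n + 1 := le_antisymm h hif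
      subst hn₀
      rw [gbMark, if_pos le_rfl]
      simp
    · have hn₀n : n₀ ≤ n := by omega
      rw [gbMark, if_neg hif]
      have hlen := ih hn₀n
      have hℓ := gbLen_le ξ n
      have hsum : ∑ k ∈ Finset.Ico n₀ (n + 1), ((2:ℝ) ^ (-ξ)) ^ k
          = (∑ k ∈ Finset.Ico n₀ n, ((2:ℝ) ^ (-ξ)) ^ k) + ((2:ℝ) ^ (-ξ)) ^ n :=
        Finset.sum_Ico_succ_top hn₀n _
      simp only [List.length_append, List.length_replicate]
      push_cast
      rw [hsum]
      have h2 : (2:ℝ) ^ (n + 1) = 2 * 2 ^ n := by ring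
      rw [h2]
      linarith

/-- Up to the right edge `j_mid` of the middle guard-band there are `2^(n-1)` data
bits and `(|G| - 2^n)/2 + ℓ_n/2` guard-band bits; the former is at least the latter. -/
theorem stmt2 (ξ : ℝ) (n₀ n : ℕ) (hξ : 0 < ξ)
    (hn₀ : (2:ℝ) ^ (-(ξ * (n₀:ℝ))) ≤ (1 - (2:ℝ) ^ (-ξ)) / 2)
    (hn : n₀ + 1 ≤ n) :
    (((gbMark ξ n₀ n).length : ℝ) - 2 ^ n) / 2 + (gbLen ξ n : ℝ) / 2 ≤ 2 ^ (n - 1) := by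
  set r : ℝ := (2:ℝ) ^ (-ξ) with hr
  have hr0 : 0 < r := Real.rpow_pos_of_pos (by norm_num) _
  have hr1 : r < 1 := by
    rw [hr]
    calc (2:ℝ) ^ (-ξ) < (2:ℝ) ^ (0:ℝ) :=
      Real.rpow_lt_rpow_of_exponent_lt (by norm_num) (by linarith)
    _ = 1 := Real.rpow_zero 2
  have hrpow : r ^ n₀ = (2:ℝ) ^ (-(ξ * (n₀:ℝ))) := by
    rw [hr, ← Real.rpow_natCast ((2:ℝ) ^ (-ξ)) n₀, ← Real.rpow_mul (by norm_num)]
    ring_nf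
  -- geometric sum bound
  have hsum : ∑ k ∈ Finset.Ico n₀ n, r ^ k ≤ 1 / 2 := by
    have hle : ∑ k ∈ Finset.Ico n₀ n, r ^ k ≤ r ^ n₀ / (1 - r) :=
      geom_sum_Ico_le_of_lt_one (le_of_lt hr0) hr1
    have : r ^ n₀ / (1 - r) ≤ 1 / 2 := by
      rw [div_le_div_iff₀ (by linarith) (by norm_num)]
      rw [hrpow]
      nlinarith [hn₀]
    linarith
  have hlen := gbMark_len_le ξ n₀ n (by omega)
  -- bound on gbLen ξ n
  obtain ⟨m, rfl⟩ : ∃ m, n = m + 1 := ⟨n - 1, by omega⟩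
  have hℓ : (gbLen ξ (m + 1) : ℝ) ≤ 2 ^ m := by
    have h := gbLen_le ξ m
    have : ((2:ℝ) ^ (-ξ)) ^ m ≤ 1 := pow_le_one₀ (le_of_lt hr0) (le_of_lt hr1)
    nlinarith [pow_pos (show (0:ℝ) < 2 by norm_num) m]
  have hLn : ((gbMark ξ n₀ (m+1)).length : ℝ) ≤ 2 ^ (m+1) + 2 ^ (m+1) / 2 * (1/2) := by
    have hpos : (0:ℝ) < 2 ^ (m+1) / 2 := by positivity
    calc ((gbMark ξ n₀ (m+1)).length : ℝ)
        ≤ 2 ^ (m+1) + 2 ^ (m+1) / 2 * ∑ k ∈ Finset.Ico n₀ (m+1), r ^ k := hlen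
      _ ≤ 2 ^ (m+1) + 2 ^ (m+1) / 2 * (1/2) := by nlinarith [hsum]
  have hmn : (m + 1) - 1 = m := by omega
  rw [hmn]
  have h2 : (2:ℝ) ^ (m + 1) = 2 * 2 ^ m := by ring
  rw [h2] at hLn
  linarith
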